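/- Let n ≥ λ, let ℓ ≤ t+ℓ, and let T ⊆ {0,1}^n be a set of size t+ℓ whose type is ℓ-fold λ-prefix collision-free. Then averaging over uniform k ∈ {0,1}^λ the conjugation of |T⟩⟨T| by (Z^k ⊗ I_{n−λ})^{⊗ℓ} ⊗ I^{⊗t} yields E_{X ← C(T,ℓ)}[|X⟩⟨X| ⊗ |T\X⟩⟨T\X|]; i.e., E_k[((Z^k⊗I)^{⊗ℓ}⊗I^{⊗t}) |T⟩⟨T| ((Z^k⊗I)^{⊗ℓ}⊗I^{⊗t})] equals the uniform mixture over ℓ-subsets X of T of |X⟩⟨X| ⊗ |T\X⟩⟨T\X|. -/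

import Mathlib

/-- The type state `|T⟩` of a finite set `T` (a collision-free type), as a real
vector indexed by tuples `ι → α`. -/
noncomputable def typeState {α : Type*} [DecidableEq α] {ι : Type*} [Fintype ι] [DecidableEq ι]
    (T : Finset α) : (ι → α) → ℝ := fun v =>
  if Function.Injective v ∧ Finset.image v Finset.univ = T then
    (Real.sqrt (Nat.factorial (Fintype.card ι)))⁻¹ else 0

/-- The sign `(-1)^{Σ_{i<ℓ} ⟨k, (u i)_{[1:λ]}⟩}` picked up by
`(Z^k ⊗ I_{n-λ})^{⊗ℓ} ⊗ I^{⊗t}` on the computational-basis tuple `u`. -/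
def zSign (n lam t ℓ : ℕ) (hln : lam ≤ n) (k : Fin lam → ZMod 2)
    (u : Fin ℓ ⊕ Fin t → Fin n → ZMod 2) : ℝ :=
  (-1 : ℝ) ^ (∑ i : Fin ℓ, ∑ j : Fin lam, k j * u (Sum.inl i) (Fin.castLE hln j)).val

lemma chi_add (x y : ZMod 2) : ((-1:ℝ))^(x+y).val = (-1:ℝ)^x.val * (-1:ℝ)^y.val := by
  rcases (by decide : ∀ z : ZMod 2, z = 0 ∨ z = 1) x with rfl | rfl <;>
    rcases (by decide : ∀ z : ZMod 2, z = 0 ∨ z = 1) y with rfl | rfl <;>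
    norm_num [show ((2:ZMod 2)).val = 0 from rfl, show ((1:ZMod 2)).val = 1 from rfl,
      show ((0:ZMod 2)).val = 0 from rfl]

lemma chi_sum {ι : Type*} [DecidableEq ι] (s : Finset ι) (f : ι → ZMod 2) :
    ((-1:ℝ))^(∑ j ∈ s, f j).val = ∏ j ∈ s, ((-1:ℝ))^(f j).val := by
  induction s using Finset.induction_on with
  | empty => simp
  | insert _ _ h ih => rw [Finset.sum_insert h, Finset.prod_insert h, chi_add, ih]

lemma sum_char (lam : ℕ) (c : Fin lam → ZMod 2) :
    ∑ k : Fin lam → ZMod 2, ((-1:ℝ))^(∑ j, k j * c j).val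
      = if c = 0 then (2:ℝ)^lam else 0 := by
  have h1 : ∀ k : Fin lam → ZMod 2, ((-1:ℝ))^(∑ j, k j * c j).val
      = ∏ j, ((-1:ℝ))^((k j) * c j).val := fun k => chi_sum _ _
  simp only [h1]
  rw [← Fintype.prod_sum (fun (j : Fin lam) (b : ZMod 2) => ((-1:ℝ))^(b * c j).val)]
  have hz : ∀ x : ZMod 2, x = 0 ∨ x = 1 := by decide
  have h2 : ∀ j : Fin lam, (∑ b : ZMod 2, ((-1:ℝ))^(b * c j).val)
      = if c j = 0 then 2 else 0 := by
    intro j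
    rw [show (Finset.univ : Finset (ZMod 2)) = {0, 1} from rfl,
      Finset.sum_pair (by decide : (0:ZMod 2) ≠ 1)]
    rcases hz (c j) with h | h <;>
      simp [h, show ((1:ZMod 2)).val = 1 from rfl, show ((0:ZMod 2)).val = 0 from rfl]
    norm_num
  simp only [h2]
  by_cases hc : c = 0
  · simp [hc]
  · obtain ⟨j0, hj0⟩ : ∃ j, c j ≠ 0 := by
      by_contra h; push_neg at h; exact hc (funext h)
    rw [if_neg hc]
    exact Finset.prod_eq_zero (Finset.mem_univ j0) (by simp [hj0])

section parts
variable {α : Type*} [DecidableEq α] {ℓ t : ℕ} {v : Fin ℓ ⊕ Fin t → α}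

lemma image_sum_univ (v : Fin ℓ ⊕ Fin t → α) :
    Finset.image v Finset.univ =
      Finset.image (v ∘ Sum.inl) Finset.univ ∪ Finset.image (v ∘ Sum.inr) Finset.univ := by
  ext x; simp [Finset.mem_image, Sum.exists, or_comm]

set_option linter.unusedSectionVars false in
lemma inj_of_parts (h1 : Function.Injective (v ∘ Sum.inl))
    (h2 : Function.Injective (v ∘ Sum.inr))
    (hd : ∀ i j, v (Sum.inl i) ≠ v (Sum.inr j)) : Function.Injective v := by
  intro x y hxy
  cases x with
  | inl i => cases y with
    | inl i' => exact congrArg Sum.inl (h1 hxy)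
    | inr j => exact absurd hxy (hd i j)
  | inr j => cases y with
    | inl i' => exact absurd hxy.symm (hd i' j)
    | inr j' => exact congrArg Sum.inr (h2 hxy)

lemma image_inr_eq (hv : Function.Injective v) :
    Finset.image (v ∘ Sum.inr) Finset.univ =
      Finset.image v Finset.univ \ Finset.image (v ∘ Sum.inl) Finset.univ := by
  ext x
  simp only [Finset.mem_image, Finset.mem_sdiff, Finset.mem_univ, true_and,
    Function.comp_apply, Sum.exists]
  constructor
  · rintro ⟨j, rfl⟩
    refine ⟨Or.inr ⟨j, rfl⟩, ?_⟩
    rintro ⟨i, hi⟩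
    exact Sum.inl_ne_inr (hv hi)
  · rintro ⟨h | ⟨j, rfl⟩, hnot⟩
    · obtain ⟨i, rfl⟩ := h
      exact absurd ⟨i, rfl⟩ hnot
    · exact ⟨j, rfl⟩

end parts

/-- for a set `T ⊆ {0,1}^n` of size `t+ℓ` whose type is `ℓ`-fold
`λ`-prefix collision-free, averaging over uniform `k` the conjugation of `|T⟩⟨T|`
by `(Z^k ⊗ I_{n-λ})^{⊗ℓ} ⊗ I^{⊗t}` yields the uniform mixture over `ℓ`-subsets
`X ⊆ T` of `|X⟩⟨X| ⊗ |T\X⟩⟨T\X|`. -/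
theorem stmt9 (n lam t ℓ : ℕ) (hln : lam ≤ n)
    (T : Finset (Fin n → ZMod 2)) (hT : T.card = t + ℓ)
    (hfree : ∀ S S' : Finset (Fin n → ZMod 2), S ⊆ T → S' ⊆ T →
      S.card = ℓ → S'.card = ℓ →
      (∀ j : Fin lam, (∑ x ∈ S, x (Fin.castLE hln j)) = ∑ x ∈ S', x (Fin.castLE hln j)) →
      S = S') :
    (((2 : ℝ) ^ lam)⁻¹ • ∑ k : Fin lam → ZMod 2,
        (Matrix.of fun u w : Fin ℓ ⊕ Fin t → Fin n → ZMod 2 =>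
          (zSign n lam t ℓ hln k u * typeState T u) *
            (zSign n lam t ℓ hln k w * typeState T w)))
      = ((((t + ℓ).choose ℓ : ℝ))⁻¹ • ∑ X ∈ T.powersetCard ℓ,
          (Matrix.of fun u w : Fin ℓ ⊕ Fin t → Fin n → ZMod 2 =>
            (typeState (ι := Fin ℓ) X (u ∘ Sum.inl) *
              typeState (ι := Fin t) (T \ X) (u ∘ Sum.inr)) *
            (typeState (ι := Fin ℓ) X (w ∘ Sum.inl) *
              typeState (ι := Fin t) (T \ X) (w ∘ Sum.inr)))) := by
  classical
  ext u w
  simp only [Matrix.smul_apply, Matrix.sum_apply, Matrix.of_apply, smul_eq_mul]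
  set a : Fin lam → ZMod 2 := fun j => ∑ i : Fin ℓ, u (Sum.inl i) (Fin.castLE hln j) with ha
  set b : Fin lam → ZMod 2 := fun j => ∑ i : Fin ℓ, w (Sum.inl i) (Fin.castLE hln j) with hb
  -- rewrite the k-sum
  have hsign : ∀ k : Fin lam → ZMod 2,
      zSign n lam t ℓ hln k u * zSign n lam t ℓ hln k w
        = ((-1:ℝ))^(∑ j, k j * (a j + b j)).val := by
    intro k
    unfold zSign
    have e1 : (∑ i : Fin ℓ, ∑ j : Fin lam, k j * u (Sum.inl i) (Fin.castLE hln j))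
        = ∑ j, k j * a j := by
      rw [Finset.sum_comm]
      exact Finset.sum_congr rfl fun j _ => (Finset.mul_sum _ _ _).symm
    have e2 : (∑ i : Fin ℓ, ∑ j : Fin lam, k j * w (Sum.inl i) (Fin.castLE hln j))
        = ∑ j, k j * b j := by
      rw [Finset.sum_comm]
      exact Finset.sum_congr rfl fun j _ => (Finset.mul_sum _ _ _).symm
    have e3 : (∑ j, k j * a j) + (∑ j, k j * b j) = ∑ j, k j * (a j + b j) := by
      rw [← Finset.sum_add_distrib]
      exact Finset.sum_congr rfl fun j _ => (mul_add _ _ _).symm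
    rw [e1, e2, ← chi_add, e3]
  have hz2 : ∀ x y : ZMod 2, x + y = 0 ↔ x = y := by decide
  have hkey : ∑ k : Fin lam → ZMod 2,
      (zSign n lam t ℓ hln k u * typeState T u) * (zSign n lam t ℓ hln k w * typeState T w)
        = (typeState T u * typeState T w) * (if a = b then (2:ℝ)^lam else 0) := by
    have : ∀ k : Fin lam → ZMod 2,
        (zSign n lam t ℓ hln k u * typeState T u) * (zSign n lam t ℓ hln k w * typeState T w)
          = (typeState T u * typeState T w) * (zSign n lam t ℓ hln k u * zSign n lam t ℓ hln k w) := by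
      intro k; ring
    simp only [this, hsign]
    rw [← Finset.mul_sum, sum_char]
    congr 1
    have : ((fun j => a j + b j) = 0) ↔ a = b := by
      constructor
      · intro h; funext j; exact (hz2 _ _).1 (congrFun h j)
      · intro h; funext j; exact (hz2 _ _).2 (congrFun h j)
    by_cases hab : a = b
    · rw [if_pos hab, if_pos (this.2 hab)]
    · rw [if_neg hab, if_neg (fun h => hab (this.1 h))]
  rw [hkey]
  -- helper: vanishing of RHS summands when v is not a valid ordering of T
  have hterm0 : ∀ (v : Fin ℓ ⊕ Fin t → Fin n → ZMod 2),
      ¬(Function.Injective v ∧ Finset.image v Finset.univ = T) →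
      ∀ X ∈ T.powersetCard ℓ,
      typeState (ι := Fin ℓ) X (v ∘ Sum.inl) * typeState (ι := Fin t) (T \ X) (v ∘ Sum.inr) = 0 := by
    intro v hv X hX
    by_contra hne
    apply hv
    have h1 : typeState (ι := Fin ℓ) X (v ∘ Sum.inl) ≠ 0 := left_ne_zero_of_mul hne
    have h2 : typeState (ι := Fin t) (T \ X) (v ∘ Sum.inr) ≠ 0 := right_ne_zero_of_mul hne
    have c1 : Function.Injective (v ∘ Sum.inl) ∧ Finset.image (v ∘ Sum.inl) Finset.univ = X := by
      by_contra hc; exact h1 (if_neg hc)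
    have c2 : Function.Injective (v ∘ Sum.inr) ∧
        Finset.image (v ∘ Sum.inr) Finset.univ = T \ X := by
      by_contra hc; exact h2 (if_neg hc)
    obtain ⟨hXT, -⟩ := Finset.mem_powersetCard.1 hX
    constructor
    · refine inj_of_parts c1.1 c2.1 (fun i j hij => ?_)
      have hi : v (Sum.inl i) ∈ X := c1.2 ▸ Finset.mem_image_of_mem _ (Finset.mem_univ i)
      have hj : v (Sum.inr j) ∈ T \ X := c2.2 ▸ Finset.mem_image_of_mem _ (Finset.mem_univ j)
      rw [← hij] at hj
      exact (Finset.mem_sdiff.1 hj).2 hi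
    · rw [image_sum_univ, c1.2, c2.2, Finset.union_sdiff_of_subset hXT]
  by_cases hu : Function.Injective u ∧ Finset.image u Finset.univ = T
  · by_cases hw : Function.Injective w ∧ Finset.image w Finset.univ = T
    · -- main case
      set Xu : Finset (Fin n → ZMod 2) := Finset.image (u ∘ Sum.inl) Finset.univ with hXu
      set Xw : Finset (Fin n → ZMod 2) := Finset.image (w ∘ Sum.inl) Finset.univ with hXw
      have hui : Function.Injective (u ∘ Sum.inl) := hu.1.comp Sum.inl_injective
      have hwi : Function.Injective (w ∘ Sum.inl) := hw.1.comp Sum.inl_injective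
      have hXuT : Xu ⊆ T := by
        intro x hx
        obtain ⟨i, -, rfl⟩ := Finset.mem_image.1 hx
        exact hu.2 ▸ Finset.mem_image_of_mem _ (Finset.mem_univ _)
      have hXwT : Xw ⊆ T := by
        intro x hx
        obtain ⟨i, -, rfl⟩ := Finset.mem_image.1 hx
        exact hw.2 ▸ Finset.mem_image_of_mem _ (Finset.mem_univ _)
      have hXuc : Xu.card = ℓ := by
        rw [hXu, Finset.card_image_of_injective _ hui, Finset.card_univ, Fintype.card_fin]
      have hXwc : Xw.card = ℓ := by
        rw [hXw, Finset.card_image_of_injective _ hwi, Finset.card_univ, Fintype.card_fin]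
      have haXu : ∀ j, a j = ∑ x ∈ Xu, x (Fin.castLE hln j) := by
        intro j
        rw [hXu]
        exact (Finset.sum_image (g := u ∘ Sum.inl)
          (f := fun x => x (Fin.castLE hln j)) (fun i _ i' _ h => hui h)).symm
      have hbXw : ∀ j, b j = ∑ x ∈ Xw, x (Fin.castLE hln j) := by
        intro j
        rw [hXw]
        exact (Finset.sum_image (g := w ∘ Sum.inl)
          (f := fun x => x (Fin.castLE hln j)) (fun i _ i' _ h => hwi h)).symm
      have hab : a = b ↔ Xu = Xw := by
        constructor
        · intro h
          exact hfree Xu Xw hXuT hXwT hXuc hXwc fun j => by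
            rw [← haXu, ← hbXw, h]
        · intro h
          funext j
          rw [haXu, hbXw, h]
      have hXu_mem : Xu ∈ T.powersetCard ℓ := Finset.mem_powersetCard.2 ⟨hXuT, hXuc⟩
      have card_sum : Fintype.card (Fin ℓ ⊕ Fin t) = ℓ + t := by simp
      have hTu : typeState T u = (Real.sqrt ((ℓ+t).factorial))⁻¹ := by
        rw [typeState, if_pos hu, card_sum]
      have hTw : typeState T w = (Real.sqrt ((ℓ+t).factorial))⁻¹ := by
        rw [typeState, if_pos hw, card_sum]
      -- value of each RHS factor
      have hfac : ∀ (v : Fin ℓ ⊕ Fin t → Fin n → ZMod 2),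
          (Function.Injective v ∧ Finset.image v Finset.univ = T) →
          ∀ X ∈ T.powersetCard ℓ,
          typeState (ι := Fin ℓ) X (v ∘ Sum.inl) * typeState (ι := Fin t) (T \ X) (v ∘ Sum.inr)
            = if Finset.image (v ∘ Sum.inl) Finset.univ = X
              then (Real.sqrt (ℓ.factorial))⁻¹ * (Real.sqrt (t.factorial))⁻¹ else 0 := by
        intro v hv X hX
        by_cases hXv : Finset.image (v ∘ Sum.inl) Finset.univ = X
        · rw [if_pos hXv]
          have e1 : typeState (ι := Fin ℓ) X (v ∘ Sum.inl) = (Real.sqrt (ℓ.factorial))⁻¹ := by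
            rw [typeState, if_pos ⟨hv.1.comp Sum.inl_injective, hXv⟩, Fintype.card_fin]
          have e2 : typeState (ι := Fin t) (T \ X) (v ∘ Sum.inr) = (Real.sqrt (t.factorial))⁻¹ := by
            rw [typeState, if_pos ⟨hv.1.comp Sum.inr_injective, by
              rw [image_inr_eq hv.1, hv.2, hXv]⟩, Fintype.card_fin]
          rw [e1, e2]
        · rw [if_neg hXv]
          have : typeState (ι := Fin ℓ) X (v ∘ Sum.inl) = 0 := by
            rw [typeState, if_neg (fun h => hXv h.2)]
          rw [this, zero_mul]
      have hrhs : ∑ X ∈ T.powersetCard ℓ,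
          ((typeState (ι := Fin ℓ) X (u ∘ Sum.inl) * typeState (ι := Fin t) (T \ X) (u ∘ Sum.inr)) *
            (typeState (ι := Fin ℓ) X (w ∘ Sum.inl) * typeState (ι := Fin t) (T \ X) (w ∘ Sum.inr)))
          = if Xu = Xw
            then ((Real.sqrt (ℓ.factorial))⁻¹ * (Real.sqrt (t.factorial))⁻¹) *
              ((Real.sqrt (ℓ.factorial))⁻¹ * (Real.sqrt (t.factorial))⁻¹) else 0 := by
        rw [Finset.sum_eq_single_of_mem Xu hXu_mem]
        · rw [hfac u hu Xu hXu_mem, hfac w hw Xu hXu_mem, if_pos rfl]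
          by_cases h : Xu = Xw
          · rw [if_pos h, if_pos h.symm]
          · rw [if_neg h, if_neg (fun h' => h h'.symm), mul_zero]
        · intro X hX hne
          rw [hfac u hu X hX, if_neg (fun h => hne h.symm), zero_mul]
      rw [hrhs, hTu, hTw]
      have h2lam : (2:ℝ)^lam ≠ 0 := by positivity
      have hsq : ∀ m : ℕ, (Real.sqrt (m.factorial))⁻¹ * (Real.sqrt (m.factorial))⁻¹
          = ((m.factorial : ℝ))⁻¹ := by
        intro m
        rw [← mul_inv, Real.mul_self_sqrt (by positivity)]
      by_cases h : Xu = Xw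
      · rw [if_pos (hab.2 h), if_pos h]
        have hcf : ((t+ℓ).choose ℓ : ℝ) * (ℓ.factorial : ℝ) * (t.factorial : ℝ)
            = ((ℓ+t).factorial : ℝ) := by
          have := Nat.choose_mul_factorial_mul_factorial (Nat.le_add_left ℓ t)
          rw [Nat.add_sub_cancel] at this
          rw [← Nat.cast_mul, ← Nat.cast_mul, this, Nat.add_comm]
        have hch : ((t+ℓ).choose ℓ : ℝ) ≠ 0 := by
          exact_mod_cast (Nat.choose_pos (Nat.le_add_left ℓ t)).ne'
        have hfl : (ℓ.factorial : ℝ) ≠ 0 := by positivity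
        have hft : (t.factorial : ℝ) ≠ 0 := by positivity
        rw [hsq (ℓ+t)]
        rw [show (Real.sqrt (ℓ.factorial))⁻¹ * (Real.sqrt (t.factorial))⁻¹ *
            ((Real.sqrt (ℓ.factorial))⁻¹ * (Real.sqrt (t.factorial))⁻¹)
          = ((Real.sqrt (ℓ.factorial))⁻¹ * (Real.sqrt (ℓ.factorial))⁻¹) *
            ((Real.sqrt (t.factorial))⁻¹ * (Real.sqrt (t.factorial))⁻¹) by ring, hsq ℓ, hsq t]
        rw [show ((2:ℝ)^lam)⁻¹ * ((((ℓ+t).factorial : ℝ))⁻¹ * 2^lam)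
          = (((ℓ+t).factorial : ℝ))⁻¹ by field_simp]
        rw [← hcf, mul_inv, mul_inv, mul_assoc]
      · rw [if_neg (fun h' => h (hab.1 h')), if_neg h]
        ring
    · -- w invalid
      have hw0 : typeState T w = 0 := by rw [typeState, if_neg hw]
      rw [hw0]
      rw [Finset.sum_eq_zero (fun X hX => by
        rw [hterm0 w hw X hX, mul_zero])]
      ring
  · -- u invalid
    have hu0 : typeState T u = 0 := by rw [typeState, if_neg hu]
    rw [hu0]
    rw [Finset.sum_eq_zero (fun X hX => by
      rw [hterm0 u hu X hX, zero_mul])]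
    ring
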